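/- Two T-quasigroups x·y = αx + βy + c and x∘y = γx + δy + d over the same abelian group (Q,+) (with α,β,γ,δ automorphisms) are orthogonal if and only if α^{-1}β - γ^{-1}δ is an automorphism (bijective endomorphism) of (Q,+). -/

import Mathlib

/-- Two T-quasigroups x·y = αx + βy + c and x∘y = γx + δy + d over the same
finite abelian group are orthogonal iff (-α)β - (-γ)δ is a bijection of Q. -/
theorem T_quasigroups_orthogonal_iff {Q : Type*} [AddCommGroup Q] [Fintype Q]
    (α β γ δ : AddAut Q) (c d : Q)
    (A B : Q → Q → Q)
    (hA : ∀ x y : Q, A x y = α x + β y + c)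
    (hB : ∀ x y : Q, B x y = γ x + δ y + d) :
    (∀ a b : Q, ∃! p : Q × Q, A p.1 p.2 = a ∧ B p.1 p.2 = b) ↔
      Function.Bijective (fun x : Q => (-α) (β x) - (-γ) (δ x)) := by
  have hαinv : ∀ z : Q, α ((-α) z) = z := fun z => AddAut.apply_neg_self Q α z
  have hγinv : ∀ z : Q, γ ((-γ) z) = z := fun z => AddAut.apply_neg_self Q γ z
  constructor
  · intro h
    rw [← Finite.injective_iff_bijective]
    intro y₁ y₂ hy
    simp only at hy
    have e1 : (-α) (β y₁) - (-α) (β y₂) = (-γ) (δ y₁) - (-γ) (δ y₂) :=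
      sub_eq_sub_iff_sub_eq_sub.mp hy
    obtain ⟨p, _, hu⟩ := h (β y₁ + c) (δ y₁ + d)
    have h1 : (0, y₁) = p := by
      apply hu
      constructor
      · simp [hA]
      · simp [hB]
    have h2 : ((-α) (β y₁) - (-α) (β y₂), y₂) = p := by
      apply hu
      constructor
      · show A _ _ = _
        rw [hA, map_sub, hαinv, hαinv]
        abel
      · show B _ _ = _
        rw [hB, e1, map_sub, hγinv, hγinv]
        abel
    have := h1.trans h2.symm
    exact (Prod.ext_iff.mp this).2
  · intro hf a b
    obtain ⟨y, hy⟩ := hf.surjective ((-α) (a - c) - (-γ) (b - d))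
    simp only at hy
    have hx : (-α) (a - c) - (-α) (β y) = (-γ) (b - d) - (-γ) (δ y) := by
      have h' := sub_eq_sub_iff_sub_eq_sub.mp hy
      have := congrArg Neg.neg h'
      simpa [neg_sub] using this
    refine ⟨((-α) (a - c) - (-α) (β y), y), ⟨?_, ?_⟩, ?_⟩
    · show A _ _ = _
      rw [hA, map_sub, hαinv, hαinv]
      abel
    · show B _ _ = _
      rw [hB, hx, map_sub, hγinv, hγinv]
      abel
    · rintro ⟨x', y'⟩ ⟨hA', hB'⟩
      simp only [hA, hB] at hA' hB'
      have hx1 : x' = (-α) (a - c) - (-α) (β y') := by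
        have h1 : α x' = a - c - β y' := by rw [← hA']; abel
        have h2 := congrArg ((-α) : AddAut Q) h1
        rw [AddAut.neg_apply_self Q α, map_sub] at h2
        exact h2
      have hx2 : x' = (-γ) (b - d) - (-γ) (δ y') := by
        have h1 : γ x' = b - d - δ y' := by rw [← hB']; abel
        have h2 := congrArg ((-γ) : AddAut Q) h1
        rw [AddAut.neg_apply_self Q γ, map_sub] at h2
        exact h2
      have hfy : (-α) (β y') - (-γ) (δ y') = (-α) (a - c) - (-γ) (b - d) :=
        (sub_eq_sub_iff_sub_eq_sub.mp (hx1.symm.trans hx2)).symm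
      have hyy : y' = y := hf.injective (hfy.trans hy.symm)
      subst hyy
      rw [Prod.mk.injEq]
      exact ⟨hx1, rfl⟩
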